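/- arXiv:1701.09083 — 2 statements merged into one kernel-verified Lean document; each statement's English description precedes it below -/
import Mathlib

section
/- Under the Mallows model MM(σ₀,φ) with 0 < φ < 1 on S_n, for any subset A ⊆ {1,...,n} and u ∈ A, P[σ_A(u) < σ_{0,A}(u)] ≤ (φ+φ²+...+φ^{σ_{0,A}(u)})/(1+φ+...+φ^{σ_{0,A}(u)}) < φ. -/
/-- Kendall tau distance between two permutations of `Fin n`. -/
def kendall {n : ℕ} (σ π : Equiv.Perm (Fin n)) : ℕ :=
  (Finset.univ.filter (fun p : Fin n × Fin n =>
    p.1 < p.2 ∧ ((σ p.1 < σ p.2 ∧ π p.2 < π p.1) ∨ (σ p.2 < σ p.1 ∧ π p.1 < π p.2)))).card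

/- Probability of the event `E` under the Mallows model `MM(σ₀, φ)`, in which a permutation
`σ` has probability proportional to `φ ^ d_τ(σ, σ₀)`. -/
open Classical in
noncomputable def mallowsProb {n : ℕ} (σ₀ : Equiv.Perm (Fin n)) (φ : ℝ)
    (E : Equiv.Perm (Fin n) → Prop) : ℝ :=
  (∑ σ : Equiv.Perm (Fin n), if E σ then φ ^ kendall σ σ₀ else 0) /
    (∑ σ : Equiv.Perm (Fin n), φ ^ kendall σ σ₀)

/-- The geometric sum `φ_{a:b} = φ^a + φ^{a+1} + ⋯ + φ^b` (equal to `0` if `a > b`). -/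
noncomputable def phiSum (φ : ℝ) (a b : ℕ) : ℝ := ∑ k ∈ Finset.Icc a b, φ ^ k

/-- One-based position of element `u` in the permutation `σ`. -/
def pos {n : ℕ} (σ : Equiv.Perm (Fin n)) (u : Fin n) : ℕ := (σ u : ℕ) + 1

/-- Projection rank of `x` within the subset `A` under `σ`. -/
def proj {n : ℕ} (σ : Equiv.Perm (Fin n)) (A : Finset (Fin n)) (x : Fin n) : ℕ :=
  (A.filter (fun y => σ y ≤ σ x)).card



def dsN (a b c d : ℕ) : ℕ := if (a < b ∧ d < c) ∨ (b < a ∧ c < d) then 1 else 0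

def K {n : ℕ} (σ π : Equiv.Perm (Fin n)) : ℕ :=
  ∑ x : Fin n, ∑ y : Fin n, dsN (σ x) (σ y) (π x) (π y)

lemma K_eq_two_kendall {n : ℕ} (σ π : Equiv.Perm (Fin n)) : K σ π = 2 * kendall σ π := by
  classical
  have hpt : ∀ x y : Fin n, dsN (σ x) (σ y) (π x) (π y) =
      (if x < y ∧ ((σ x < σ y ∧ π y < π x) ∨ (σ y < σ x ∧ π x < π y)) then 1 else 0) +
      (if y < x ∧ ((σ x < σ y ∧ π y < π x) ∨ (σ y < σ x ∧ π x < π y)) then 1 else 0) := by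
    intro x y
    have hD : (((σ x : ℕ) < σ y ∧ (π y : ℕ) < π x) ∨ ((σ y : ℕ) < σ x ∧ (π x : ℕ) < π y)) ↔
        ((σ x < σ y ∧ π y < π x) ∨ (σ y < σ x ∧ π x < π y)) := by
      simp only [Fin.lt_def]
    rw [dsN, if_congr hD rfl rfl]
    rcases lt_trichotomy x y with h | h | h
    · simp [h, not_lt_of_gt h]
    · subst h
      simp [lt_irrefl]
    · simp [h, not_lt_of_gt h]
  have h1 : K σ π = ∑ p : Fin n × Fin n, dsN (σ p.1) (σ p.2) (π p.1) (π p.2) := by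
    exact (Fintype.sum_prod_type (fun p : Fin n × Fin n => dsN (σ p.1) (σ p.2) (π p.1) (π p.2))).symm
  have h2 : (kendall σ π : ℕ) = ∑ p : Fin n × Fin n,
      (if p.1 < p.2 ∧ ((σ p.1 < σ p.2 ∧ π p.2 < π p.1) ∨ (σ p.2 < σ p.1 ∧ π p.1 < π p.2)) then 1 else 0) := by
    rw [kendall, Finset.card_filter]
  have h3 : (∑ p : Fin n × Fin n,
      (if p.2 < p.1 ∧ ((σ p.1 < σ p.2 ∧ π p.2 < π p.1) ∨ (σ p.2 < σ p.1 ∧ π p.1 < π p.2)) then 1 else 0)) =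
      (∑ p : Fin n × Fin n,
      (if p.1 < p.2 ∧ ((σ p.1 < σ p.2 ∧ π p.2 < π p.1) ∨ (σ p.2 < σ p.1 ∧ π p.1 < π p.2)) then 1 else 0)) := by
    apply Fintype.sum_equiv (Equiv.prodComm (Fin n) (Fin n))
    intro p
    apply if_congr _ rfl rfl
    constructor
    · rintro ⟨h, hd⟩
      exact ⟨h, hd.symm.imp (fun hh => ⟨hh.1, hh.2⟩) (fun hh => ⟨hh.1, hh.2⟩)⟩
    · rintro ⟨h, hd⟩
      exact ⟨h, hd.symm.imp (fun hh => ⟨hh.1, hh.2⟩) (fun hh => ⟨hh.1, hh.2⟩)⟩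
  rw [h1, h2]
  rw [Finset.sum_congr rfl (fun p _ => hpt p.1 p.2), Finset.sum_add_distrib, h3]
  ring

lemma dsN_symm (a b c d : ℕ) : dsN a b c d = dsN b a d c := by
  unfold dsN; split_ifs <;> omega

lemma dsN_key {a b A pa pb Px : ℕ} (hab : a < b) (hp : pb < pa) :
    dsN A b Px pa + dsN A a Px pb ≤ dsN A a Px pa + dsN A b Px pb := by
  unfold dsN; split_ifs <;> omega

lemma K_swap {n : ℕ} (σ π : Equiv.Perm (Fin n)) (u b : Fin n)
    (h1 : σ u < σ b) (h2 : π b < π u) :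
    K (σ * Equiv.swap u b) π + 2 ≤ K σ π := by
  classical
  have hub : u ≠ b := by
    rintro rfl; exact lt_irrefl _ h1
  set σ' := σ * Equiv.swap u b with hσ'
  have hσ'u : σ' u = σ b := by simp [hσ', Equiv.Perm.mul_apply]
  have hσ'b : σ' b = σ u := by simp [hσ', Equiv.Perm.mul_apply]
  have hσ'x : ∀ x, x ≠ u → x ≠ b → σ' x = σ x := fun x hxu hxb => by
    simp [hσ', Equiv.Perm.mul_apply, Equiv.swap_apply_of_ne_of_ne hxu hxb]
  set t : Fin n → Fin n → ℕ := fun x y => dsN (σ x) (σ y) (π x) (π y) with ht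
  set t' : Fin n → Fin n → ℕ := fun x y => dsN (σ' x) (σ' y) (π x) (π y) with ht'
  set E : Finset (Fin n) := (Finset.univ.erase u).erase b with hE
  have hbE : b ∈ Finset.univ.erase u := Finset.mem_erase.mpr ⟨Ne.symm hub, Finset.mem_univ b⟩
  have sum_split : ∀ f : Fin n → ℕ, ∑ y, f y = (∑ y ∈ E, f y) + f b + f u := by
    intro f
    rw [hE, Finset.sum_erase_add _ _ hbE, Finset.sum_erase_add _ _ (Finset.mem_univ u)]
  have hmemE : ∀ x ∈ E, x ≠ u ∧ x ≠ b := by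
    intro x hx
    rw [hE] at hx
    simp only [Finset.mem_erase] at hx
    exact ⟨hx.2.1, hx.1⟩
  -- h1 h2 as ℕ
  have h1' : (σ u : ℕ) < σ b := h1
  have h2' : (π b : ℕ) < π u := h2
  -- middle rows
  have hrow : ∀ x ∈ E, (∑ y, t' x y) ≤ ∑ y, t x y := by
    intro x hx
    obtain ⟨hxu, hxb⟩ := hmemE x hx
    rw [sum_split (t' x), sum_split (t x)]
    have hmid : (∑ y ∈ E, t' x y) = ∑ y ∈ E, t x y := by
      apply Finset.sum_congr rfl
      intro y hy
      obtain ⟨hyu, hyb⟩ := hmemE y hy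
      simp only [ht, ht', hσ'x x hxu hxb, hσ'x y hyu hyb]
    have hkey : t' x b + t' x u ≤ t x b + t x u := by
      simp only [ht, ht', hσ'x x hxu hxb, hσ'u, hσ'b]
      have := dsN_key (A := (σ x : ℕ)) (Px := (π x : ℕ)) h1' h2'
      omega
    omega
  have hsumrow : (∑ x ∈ E, ∑ y, t' x y) ≤ ∑ x ∈ E, ∑ y, t x y :=
    Finset.sum_le_sum hrow
  -- rows u and b
  have hub2 : (∑ y, t' b y) + (∑ y, t' u y) + 2 ≤ (∑ y, t b y) + (∑ y, t u y) := by
    rw [sum_split (t' b), sum_split (t' u), sum_split (t b), sum_split (t u)]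
    have hmid : (∑ y ∈ E, t' b y) + (∑ y ∈ E, t' u y) ≤ (∑ y ∈ E, t b y) + (∑ y ∈ E, t u y) := by
      rw [← Finset.sum_add_distrib, ← Finset.sum_add_distrib]
      apply Finset.sum_le_sum
      intro y hy
      obtain ⟨hyu, hyb⟩ := hmemE y hy
      simp only [ht, ht', hσ'x y hyu hyb, hσ'u, hσ'b]
      rw [dsN_symm ((σ u : ℕ)) _ _ _, dsN_symm ((σ b : ℕ)) _ _ _,
          dsN_symm ((σ u : ℕ)) _ _ _, dsN_symm ((σ b : ℕ)) _ _ _]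
      have := dsN_key (A := (σ y : ℕ)) (Px := (π y : ℕ)) h1' h2'
      omega
    have c1 : t' b b = 0 := by simp [ht', dsN]
    have c2 : t' u u = 0 := by simp [ht', dsN]
    have c3 : t b b = 0 := by simp [ht, dsN]
    have c4 : t u u = 0 := by simp [ht, dsN]
    have c5 : t' b u = 0 := by
      simp only [ht', hσ'u, hσ'b, dsN]
      rw [if_neg]; omega
    have c6 : t' u b = 0 := by
      simp only [ht', hσ'u, hσ'b, dsN]
      rw [if_neg]; omega
    have c7 : t b u = 1 := by
      simp only [ht, dsN]
      rw [if_pos]; omega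
    have c8 : t u b = 1 := by
      simp only [ht, dsN]
      rw [if_pos]; omega
    omega
  have hK' : K σ' π = (∑ x ∈ E, ∑ y, t' x y) + (∑ y, t' b y) + (∑ y, t' u y) :=
    sum_split (fun x => ∑ y, t' x y)
  have hK : K σ π = (∑ x ∈ E, ∑ y, t x y) + (∑ y, t b y) + (∑ y, t u y) :=
    sum_split (fun x => ∑ y, t x y)
  omega


section Step
variable {n : ℕ} (σ₀ : Equiv.Perm (Fin n)) (A : Finset (Fin n)) (u : Fin n)

/-- `B`-elements (A-elements σ₀-below u) that are σ-above u. -/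
def Cset (σ : Equiv.Perm (Fin n)) : Finset (Fin n) :=
  A.filter (fun y => σ₀ y < σ₀ u ∧ σ u < σ y)

/-- `B`-elements that are σ-below u. -/
def Dset (σ : Equiv.Perm (Fin n)) : Finset (Fin n) :=
  A.filter (fun y => σ₀ y < σ₀ u ∧ σ y < σ u)

noncomputable def step (σ : Equiv.Perm (Fin n)) : Equiv.Perm (Fin n) :=
  if h : (Cset σ₀ A u σ).Nonempty then
    σ * Equiv.swap u (σ⁻¹ (((Cset σ₀ A u σ).image σ).min' (h.image σ)))
  else σ

noncomputable def gstep (σ : Equiv.Perm (Fin n)) : Equiv.Perm (Fin n) :=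
  if h : (Dset σ₀ A u σ).Nonempty then
    σ * Equiv.swap u (σ⁻¹ (((Dset σ₀ A u σ).image σ).max' (h.image σ)))
  else σ

variable {σ₀ A u}

section withb
variable {σ : Equiv.Perm (Fin n)} (h : (Cset σ₀ A u σ).Nonempty)
include h

noncomputable def bElt : Fin n := σ⁻¹ (((Cset σ₀ A u σ).image σ).min' (h.image σ))

lemma sigma_bElt : σ (bElt h) = ((Cset σ₀ A u σ).image σ).min' (h.image σ) :=
  Equiv.apply_symm_apply σ _

lemma bElt_mem : bElt h ∈ Cset σ₀ A u σ := by
  have hm := Finset.min'_mem ((Cset σ₀ A u σ).image σ) (h.image σ)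
  rw [Finset.mem_image] at hm
  obtain ⟨y, hy, hyeq⟩ := hm
  have : bElt h = y := by
    rw [bElt, ← hyeq, Equiv.Perm.coe_inv, Equiv.symm_apply_apply]
  rwa [this]

lemma bElt_min : ∀ y ∈ Cset σ₀ A u σ, σ (bElt h) ≤ σ y := by
  intro y hy
  rw [sigma_bElt]
  exact Finset.min'_le _ _ (Finset.mem_image_of_mem σ hy)

lemma step_eq : step σ₀ A u σ = σ * Equiv.swap u (bElt h) := by
  rw [step, dif_pos h, bElt]

lemma bElt_mem' : bElt h ∈ A ∧ σ₀ (bElt h) < σ₀ u ∧ σ u < σ (bElt h) := by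
  have := bElt_mem h
  rw [Cset, Finset.mem_filter] at this
  exact ⟨this.1, this.2.1, this.2.2⟩

lemma bElt_ne_u : bElt h ≠ u := by
  intro hh
  have := (bElt_mem' h).2.2
  rw [hh] at this
  exact lt_irrefl _ this

-- projection increases
lemma step_proj (hu : u ∈ A) : proj σ A u + 1 ≤ proj (step σ₀ A u σ) A u := by
  set b := bElt h with hb
  obtain ⟨hbA, hb0, hbσ⟩ := bElt_mem' h
  rw [step_eq h]
  set σ' := σ * Equiv.swap u b with hσ'
  have hσ'u : σ' u = σ b := by simp [hσ', Equiv.Perm.mul_apply]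
  have hσ'b : σ' b = σ u := by simp [hσ', Equiv.Perm.mul_apply]
  have hσ'x : ∀ x, x ≠ u → x ≠ b → σ' x = σ x := fun x hxu hxb => by
    simp [hσ', Equiv.Perm.mul_apply, Equiv.swap_apply_of_ne_of_ne hxu hxb]
  have hsub : insert b (A.filter (fun y => σ y ≤ σ u)) ⊆ A.filter (fun y => σ' y ≤ σ' u) := by
    intro y hy
    rw [Finset.mem_insert] at hy
    rcases hy with rfl | hy
    · rw [Finset.mem_filter]
      exact ⟨hbA, by rw [hσ'b, hσ'u]; exact le_of_lt hbσ⟩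
    · rw [Finset.mem_filter] at hy ⊢
      refine ⟨hy.1, ?_⟩
      rcases eq_or_ne y u with rfl | hyu
      · exact le_refl _
      · have hyb : y ≠ b := by
          rintro rfl
          exact absurd hy.2 (not_le_of_gt hbσ)
        rw [hσ'x y hyu hyb, hσ'u]
        exact le_of_lt (lt_of_le_of_lt hy.2 hbσ)
  have hbnot : b ∉ A.filter (fun y => σ y ≤ σ u) := by
    rw [Finset.mem_filter]
    rintro ⟨-, hle⟩
    exact absurd hle (not_le_of_gt hbσ)
  calc proj σ A u + 1 = (insert b (A.filter (fun y => σ y ≤ σ u))).card := by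
        rw [Finset.card_insert_of_notMem hbnot, proj]
    _ ≤ _ := Finset.card_le_card hsub

-- Dset of step σ is insert b (Dset σ)
lemma Dset_step : Dset σ₀ A u (step σ₀ A u σ) = insert (bElt h) (Dset σ₀ A u σ) := by
  set b := bElt h with hb
  obtain ⟨hbA, hb0, hbσ⟩ := bElt_mem' h
  rw [step_eq h]
  set σ' := σ * Equiv.swap u b with hσ'
  have hσ'u : σ' u = σ b := by simp [hσ', Equiv.Perm.mul_apply]
  have hσ'b : σ' b = σ u := by simp [hσ', Equiv.Perm.mul_apply]
  have hσ'x : ∀ x, x ≠ u → x ≠ b → σ' x = σ x := fun x hxu hxb => by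
    simp [hσ', Equiv.Perm.mul_apply, Equiv.swap_apply_of_ne_of_ne hxu hxb]
  ext y
  simp only [Dset, Finset.mem_filter, Finset.mem_insert]
  constructor
  · rintro ⟨hyA, hy0, hyσ⟩
    rcases eq_or_ne y b with rfl | hyb
    · exact Or.inl rfl
    · have hyu : y ≠ u := by rintro rfl; exact lt_irrefl _ hy0
      rw [hσ'x y hyu hyb, hσ'u] at hyσ
      right
      refine ⟨hyA, hy0, ?_⟩
      by_contra hcon
      push_neg at hcon
      have hyC : y ∈ Cset σ₀ A u σ := by
        rw [Cset, Finset.mem_filter]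
        refine ⟨hyA, hy0, lt_of_le_of_ne hcon ?_⟩
        intro hc
        exact hyu (σ.injective hc.symm)
      have := bElt_min h y hyC
      rw [← hb] at this
      exact absurd hyσ (not_lt_of_ge this)
  · rintro (rfl | ⟨hyA, hy0, hyσ⟩)
    · exact ⟨hbA, hb0, by rw [hσ'b, hσ'u]; exact hbσ⟩
    · have hyu : y ≠ u := by rintro rfl; exact lt_irrefl _ hy0
      have hyb : y ≠ b := by
        rintro rfl
        exact absurd hyσ (not_lt_of_gt hbσ)
      exact ⟨hyA, hy0, by rw [hσ'x y hyu hyb, hσ'u]; exact lt_trans hyσ hbσ⟩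

lemma bElt_not_mem_Dset : bElt h ∉ Dset σ₀ A u σ := by
  obtain ⟨-, -, hbσ⟩ := bElt_mem' h
  rw [Dset, Finset.mem_filter]
  rintro ⟨-, -, hlt⟩
  exact absurd hlt (not_lt_of_gt hbσ)

lemma Dset_step_card :
    (Dset σ₀ A u (step σ₀ A u σ)).card = (Dset σ₀ A u σ).card + 1 := by
  rw [Dset_step h, Finset.card_insert_of_notMem (bElt_not_mem_Dset h)]

-- gstep is a left inverse
lemma gstep_step : gstep σ₀ A u (step σ₀ A u σ) = σ := by
  set b := bElt h with hb
  obtain ⟨hbA, hb0, hbσ⟩ := bElt_mem' h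
  set σ' := σ * Equiv.swap u b with hσ'
  have hstep : step σ₀ A u σ = σ' := step_eq h
  have hσ'u : σ' u = σ b := by simp [hσ', Equiv.Perm.mul_apply]
  have hσ'b : σ' b = σ u := by simp [hσ', Equiv.Perm.mul_apply]
  have hbD : b ∈ Dset σ₀ A u σ' := by
    rw [Dset, Finset.mem_filter]
    exact ⟨hbA, hb0, by rw [hσ'b, hσ'u]; exact hbσ⟩
  have hne : (Dset σ₀ A u σ').Nonempty := ⟨b, hbD⟩
  have hmax : ∀ y ∈ Dset σ₀ A u σ', σ' y ≤ σ' b := by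
    intro y hy
    rw [Dset, Finset.mem_filter] at hy
    obtain ⟨hyA, hy0, hyσ⟩ := hy
    rcases eq_or_ne y b with rfl | hyb
    · exact le_refl _
    · have hyu : y ≠ u := by rintro rfl; exact lt_irrefl _ hy0
      have hσ'y : σ' y = σ y := by
        simp [hσ', Equiv.Perm.mul_apply, Equiv.swap_apply_of_ne_of_ne hyu hyb]
      rw [hσ'y, hσ'b]
      by_contra hcon
      push_neg at hcon
      have hyC : y ∈ Cset σ₀ A u σ := by
        rw [Cset, Finset.mem_filter]
        exact ⟨hyA, hy0, hcon⟩
      have hmin := bElt_min h y hyC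
      rw [← hb] at hmin
      rw [hσ'y, hσ'u] at hyσ
      have : y = b := σ.injective (le_antisymm (le_of_lt hyσ) hmin)
      exact hyb this
  have hmaxeq : ((Dset σ₀ A u σ').image σ').max' (hne.image σ') = σ' b := by
    apply le_antisymm
    · apply Finset.max'_le
      intro z hz
      rw [Finset.mem_image] at hz
      obtain ⟨y, hy, rfl⟩ := hz
      exact hmax y hy
    · exact Finset.le_max' _ _ (Finset.mem_image_of_mem σ' hbD)
  rw [hstep, gstep, dif_pos hne, hmaxeq, Equiv.Perm.coe_inv, Equiv.symm_apply_apply]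
  rw [hσ', mul_assoc, Equiv.swap_mul_self, mul_one]

end withb
end Step

section Counting
variable {n : ℕ} {σ₀ : Equiv.Perm (Fin n)} {A : Finset (Fin n)} {u : Fin n}

lemma proj_pos (σ : Equiv.Perm (Fin n)) (hu : u ∈ A) : 1 ≤ proj σ A u := by
  rw [proj]
  refine Finset.card_pos.mpr ⟨u, ?_⟩
  rw [Finset.mem_filter]
  exact ⟨hu, le_refl _⟩

/-- `|B| + 1 = r`. -/
lemma Bcard (hu : u ∈ A) :
    (A.filter (fun y => σ₀ y < σ₀ u)).card + 1 = proj σ₀ A u := by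
  have hins : A.filter (fun y => σ₀ y ≤ σ₀ u) = insert u (A.filter (fun y => σ₀ y < σ₀ u)) := by
    ext y
    simp only [Finset.mem_filter, Finset.mem_insert]
    constructor
    · rintro ⟨hyA, hle⟩
      rcases lt_or_eq_of_le hle with hlt | heq
      · exact Or.inr ⟨hyA, hlt⟩
      · exact Or.inl (σ₀.injective heq)
    · rintro (rfl | ⟨hyA, hlt⟩)
      · exact ⟨hu, le_refl _⟩
      · exact ⟨hyA, le_of_lt hlt⟩
  have hnot : u ∉ A.filter (fun y => σ₀ y < σ₀ u) := by
    rw [Finset.mem_filter]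
    rintro ⟨-, hlt⟩
    exact lt_irrefl _ hlt
  rw [proj, hins, Finset.card_insert_of_notMem hnot]

/-- `|Cset σ| + |Dset σ| = |B|`. -/
lemma Cset_Dset_card (σ : Equiv.Perm (Fin n)) :
    (Cset σ₀ A u σ).card + (Dset σ₀ A u σ).card = (A.filter (fun y => σ₀ y < σ₀ u)).card := by
  rw [Cset, Dset, ← Finset.card_union_of_disjoint]
  · congr 1
    ext y
    simp only [Finset.mem_union, Finset.mem_filter]
    constructor
    · rintro (⟨hyA, hy0, -⟩ | ⟨hyA, hy0, -⟩) <;> exact ⟨hyA, hy0⟩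
    · rintro ⟨hyA, hy0⟩
      have hyu : y ≠ u := by rintro rfl; exact lt_irrefl _ hy0
      rcases lt_or_gt_of_ne (fun hc : σ y = σ u => hyu (σ.injective hc)) with hlt | hgt
      · exact Or.inr ⟨hyA, hy0, hlt⟩
      · exact Or.inl ⟨hyA, hy0, hgt⟩
  · rw [Finset.disjoint_filter]
    rintro y - ⟨-, hgt⟩ ⟨-, hlt⟩
    exact absurd hlt (not_lt_of_gt hgt)

lemma Dset_le_proj (σ : Equiv.Perm (Fin n)) (hu : u ∈ A) :
    (Dset σ₀ A u σ).card + 1 ≤ proj σ A u := by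
  have hsub : insert u (Dset σ₀ A u σ) ⊆ A.filter (fun y => σ y ≤ σ u) := by
    intro y hy
    rw [Finset.mem_insert] at hy
    rcases hy with rfl | hy
    · rw [Finset.mem_filter]; exact ⟨hu, le_refl _⟩
    · rw [Dset, Finset.mem_filter] at hy
      rw [Finset.mem_filter]
      exact ⟨hy.1, le_of_lt hy.2.2⟩
  have hnot : u ∉ Dset σ₀ A u σ := by
    rw [Dset, Finset.mem_filter]
    rintro ⟨-, hlt, -⟩
    exact lt_irrefl _ hlt
  calc (Dset σ₀ A u σ).card + 1 = (insert u (Dset σ₀ A u σ)).card :=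
        (Finset.card_insert_of_notMem hnot).symm
    _ ≤ _ := Finset.card_le_card hsub

lemma Cset_nonempty_of (σ : Equiv.Perm (Fin n)) (hu : u ∈ A)
    (hm : (Dset σ₀ A u σ).card + 2 ≤ proj σ₀ A u) : (Cset σ₀ A u σ).Nonempty := by
  rw [← Finset.card_pos]
  have h1 := Cset_Dset_card (σ₀ := σ₀) (A := A) (u := u) σ
  have h2 := Bcard (σ₀ := σ₀) hu
  omega

lemma step_kendall {σ : Equiv.Perm (Fin n)} (h : (Cset σ₀ A u σ).Nonempty) :
    kendall (step σ₀ A u σ) σ₀ + 1 ≤ kendall σ σ₀ := by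
  obtain ⟨-, hb0, hbσ⟩ := bElt_mem' h
  have := K_swap σ σ₀ u (bElt h) hbσ hb0
  rw [← step_eq h] at this
  have e1 := K_eq_two_kendall (step σ₀ A u σ) σ₀
  have e2 := K_eq_two_kendall σ σ₀
  omega

/-- Main iteration lemma. -/
lemma iter_main (hu : u ∈ A) (σ : Equiv.Perm (Fin n)) (j : ℕ)
    (hj : proj σ A u = j) (hj1 : 1 ≤ j) (hjr : j < proj σ₀ A u) :
    ∀ i, i ≤ proj σ₀ A u - j →
      (Dset σ₀ A u ((step σ₀ A u)^[i] σ)).card + 1 ≤ j + i ∧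
      kendall ((step σ₀ A u)^[i] σ) σ₀ + i ≤ kendall σ σ₀ ∧
      j + i ≤ proj ((step σ₀ A u)^[i] σ) A u ∧
      (gstep σ₀ A u)^[i] ((step σ₀ A u)^[i] σ) = σ := by
  intro i
  induction i with
  | zero =>
    intro _
    simp only [Function.iterate_zero, id_eq]
    have := Dset_le_proj (σ₀ := σ₀) σ hu
    exact ⟨by omega, by omega, by omega, by simp⟩
  | succ i ih =>
    intro hi
    obtain ⟨ihm, ihk, ihp, ihg⟩ := ih (by omega)
    set τ := (step σ₀ A u)^[i] σ with hτ
    have hne : (Cset σ₀ A u τ).Nonempty := by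
      apply Cset_nonempty_of τ hu
      omega
    have hit : (step σ₀ A u)^[i+1] σ = step σ₀ A u τ := by
      rw [hτ, Function.iterate_succ_apply']
    refine ⟨?_, ?_, ?_, ?_⟩
    · rw [hit, Dset_step_card hne]
      omega
    · rw [hit]
      have := step_kendall hne
      omega
    · rw [hit]
      have := step_proj hne hu
      omega
    · rw [hit, Function.iterate_succ_apply, gstep_step hne]
      exact ihg
end Counting

section PhiSum
variable {φ : ℝ}

lemma phiSum_zero_split (r : ℕ) : phiSum φ 0 r = 1 + phiSum φ 1 r := by
  rw [phiSum, phiSum]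
  have h : Finset.Icc 0 r = insert 0 (Finset.Icc 1 r) := by
    ext k
    simp only [Finset.mem_Icc, Finset.mem_insert]
    omega
  rw [h, Finset.sum_insert (by simp), pow_zero]

lemma phiSum_one_eq (r : ℕ) : phiSum φ 1 r = ∑ j ∈ Finset.range r, φ ^ (j + 1) := by
  induction r with
  | zero => simp [phiSum]
  | succ r ih =>
    rw [phiSum, Finset.sum_Icc_succ_top (by omega), ← phiSum, ih, Finset.sum_range_succ]

lemma phiSum_zero_eq (r : ℕ) : phiSum φ 0 r = ∑ j ∈ Finset.range (r + 1), φ ^ j := by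
  induction r with
  | zero => simp [phiSum]
  | succ r ih =>
    rw [phiSum, Finset.sum_Icc_succ_top (by omega), ← phiSum, ih, Finset.sum_range_succ _ (r + 1)]

lemma sum_reflect_phi (r : ℕ) : ∑ j ∈ Finset.range r, φ ^ (r - j) = phiSum φ 1 r := by
  rw [phiSum_one_eq, ← Finset.sum_range_reflect (fun j => φ ^ (j + 1)) r]
  apply Finset.sum_congr rfl
  intro j hj
  rw [Finset.mem_range] at hj
  congr 1
  omega

lemma phi_mul_phiSum (r : ℕ) : φ * phiSum φ 0 r = phiSum φ 1 r + φ ^ (r + 1) := by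
  have h1 : phiSum φ 1 (r + 1) = phiSum φ 1 r + φ ^ (r + 1) := by
    rw [phiSum, Finset.sum_Icc_succ_top (by omega : 1 ≤ r + 1), ← phiSum]
  rw [phiSum_zero_eq, Finset.mul_sum, ← h1, phiSum_one_eq]
  apply Finset.sum_congr rfl
  intro j _
  ring

lemma phiSum_one_nonneg (hφ0 : 0 < φ) (r : ℕ) : 0 ≤ phiSum φ 1 r :=
  Finset.sum_nonneg fun k _ => le_of_lt (pow_pos hφ0 k)

end PhiSum

section MainSum
variable {n : ℕ} {σ₀ : Equiv.Perm (Fin n)} {A : Finset (Fin n)} {u : Fin n} {φ : ℝ}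

lemma Lj_bound (hφ0 : 0 < φ) (hφ1 : φ < 1) (hu : u ∈ A) (j : ℕ) (hj1 : 1 ≤ j)
    (hjr : j < proj σ₀ A u) :
    ∑ σ ∈ Finset.univ.filter (fun σ : Equiv.Perm (Fin n) => proj σ A u = j), φ ^ kendall σ σ₀
      ≤ φ ^ (proj σ₀ A u - j) *
        ∑ σ ∈ Finset.univ.filter (fun σ : Equiv.Perm (Fin n) => proj σ₀ A u ≤ proj σ A u),
          φ ^ kendall σ σ₀ := by
  classical
  set r := proj σ₀ A u with hr
  set s := r - j with hs
  set Sj := Finset.univ.filter (fun σ : Equiv.Perm (Fin n) => proj σ A u = j) with hSj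
  set Rs := Finset.univ.filter (fun σ : Equiv.Perm (Fin n) => r ≤ proj σ A u) with hRs
  have hmem : ∀ σ ∈ Sj, proj σ A u = j := by
    intro σ hσ; rw [hSj, Finset.mem_filter] at hσ; exact hσ.2
  have hiter : ∀ σ ∈ Sj,
      kendall ((step σ₀ A u)^[s] σ) σ₀ + s ≤ kendall σ σ₀ ∧ r ≤ proj ((step σ₀ A u)^[s] σ) A u ∧
      (gstep σ₀ A u)^[s] ((step σ₀ A u)^[s] σ) = σ := by
    intro σ hσ
    obtain ⟨-, h2, h3, h4⟩ := iter_main hu σ j (hmem σ hσ) hj1 hjr s (le_refl _)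
    exact ⟨h2, by omega, h4⟩
  have hinj : ∀ σ₁ ∈ Sj, ∀ σ₂ ∈ Sj, (step σ₀ A u)^[s] σ₁ = (step σ₀ A u)^[s] σ₂ → σ₁ = σ₂ := by
    intro σ₁ h₁ σ₂ h₂ heq
    have e1 := (hiter σ₁ h₁).2.2
    have e2 := (hiter σ₂ h₂).2.2
    rw [← e1, ← e2, heq]
  have hmaps : ∀ σ ∈ Sj, (step σ₀ A u)^[s] σ ∈ Rs := by
    intro σ hσ
    rw [hRs, Finset.mem_filter]
    exact ⟨Finset.mem_univ _, (hiter σ hσ).2.1⟩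
  calc ∑ σ ∈ Sj, φ ^ kendall σ σ₀
      ≤ ∑ σ ∈ Sj, φ ^ s * φ ^ kendall ((step σ₀ A u)^[s] σ) σ₀ := by
        apply Finset.sum_le_sum
        intro σ hσ
        rw [← pow_add]
        exact pow_le_pow_of_le_one (le_of_lt hφ0) (le_of_lt hφ1) (by have := (hiter σ hσ).1; omega)
    _ = φ ^ s * ∑ σ ∈ Sj, φ ^ kendall ((step σ₀ A u)^[s] σ) σ₀ := by rw [Finset.mul_sum]
    _ = φ ^ s * ∑ τ ∈ Sj.image ((step σ₀ A u)^[s]), φ ^ kendall τ σ₀ := by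
        rw [Finset.sum_image hinj]
    _ ≤ φ ^ s * ∑ σ ∈ Rs, φ ^ kendall σ σ₀ := by
        apply mul_le_mul_of_nonneg_left _ (le_of_lt (pow_pos hφ0 s))
        apply Finset.sum_le_sum_of_subset_of_nonneg
        · intro τ hτ
          rw [Finset.mem_image] at hτ
          obtain ⟨σ, hσ, rfl⟩ := hτ
          exact hmaps σ hσ
        · intro τ _ _
          exact le_of_lt (pow_pos hφ0 _)

lemma L_bound (hφ0 : 0 < φ) (hφ1 : φ < 1) (hu : u ∈ A) :
    ∑ σ ∈ Finset.univ.filter (fun σ : Equiv.Perm (Fin n) => proj σ A u < proj σ₀ A u),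
      φ ^ kendall σ σ₀
      ≤ phiSum φ 1 (proj σ₀ A u) *
        ∑ σ ∈ Finset.univ.filter (fun σ : Equiv.Perm (Fin n) => proj σ₀ A u ≤ proj σ A u),
          φ ^ kendall σ σ₀ := by
  classical
  set r := proj σ₀ A u with hr
  set R := ∑ σ ∈ Finset.univ.filter (fun σ : Equiv.Perm (Fin n) => r ≤ proj σ A u),
      φ ^ kendall σ σ₀ with hR
  have hRnn : 0 ≤ R := Finset.sum_nonneg fun σ _ => le_of_lt (pow_pos hφ0 _)
  set SS := Finset.univ.filter (fun σ : Equiv.Perm (Fin n) => proj σ A u < r) with hSS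
  have hfib : ∑ σ ∈ SS, φ ^ kendall σ σ₀ =
      ∑ j ∈ Finset.range r, ∑ σ ∈ SS.filter (fun σ => proj σ A u = j), φ ^ kendall σ σ₀ := by
    rw [Finset.sum_fiberwise_of_maps_to]
    intro σ hσ
    rw [hSS, Finset.mem_filter] at hσ
    rw [Finset.mem_range]
    exact hσ.2
  have hfib2 : ∀ j < r, SS.filter (fun σ => proj σ A u = j) =
      Finset.univ.filter (fun σ : Equiv.Perm (Fin n) => proj σ A u = j) := by
    intro j hj
    rw [hSS, Finset.filter_filter]
    apply Finset.filter_congr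
    intro σ _
    constructor
    · rintro ⟨-, h⟩; exact h
    · intro h; exact ⟨by omega, h⟩
  calc ∑ σ ∈ SS, φ ^ kendall σ σ₀
      = ∑ j ∈ Finset.range r, ∑ σ ∈ SS.filter (fun σ => proj σ A u = j), φ ^ kendall σ σ₀ := hfib
    _ ≤ ∑ j ∈ Finset.range r, φ ^ (r - j) * R := by
        apply Finset.sum_le_sum
        intro j hj
        rw [Finset.mem_range] at hj
        rw [hfib2 j hj]
        rcases Nat.eq_zero_or_pos j with rfl | hj1
        · have : Finset.univ.filter (fun σ : Equiv.Perm (Fin n) => proj σ A u = 0) = ∅ := by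
            apply Finset.filter_false_of_mem
            intro σ _
            have := proj_pos σ hu
            omega
          rw [this, Finset.sum_empty]
          exact mul_nonneg (le_of_lt (pow_pos hφ0 _)) hRnn
        · exact Lj_bound hφ0 hφ1 hu j hj1 hj
    _ = (∑ j ∈ Finset.range r, φ ^ (r - j)) * R := by rw [Finset.sum_mul]
    _ = phiSum φ 1 r * R := by rw [sum_reflect_phi]
end MainSum

/-- Lemma 4.5, part 2): under `MM(σ₀,φ)` with `0 < φ < 1`, for `A ⊆ [n]` and `u ∈ A`,
`P[σ_A(u) < σ_{0,A}(u)] ≤ φ_{1:σ_{0,A}(u)} / φ_{0:σ_{0,A}(u)} < φ`. -/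
theorem mallows_proj_below {n : ℕ} (σ₀ : Equiv.Perm (Fin n)) (φ : ℝ)
    (hφ0 : 0 < φ) (hφ1 : φ < 1) (A : Finset (Fin n)) (u : Fin n) (hu : u ∈ A) :
    mallowsProb σ₀ φ (fun σ => proj σ A u < proj σ₀ A u) ≤
      phiSum φ 1 (proj σ₀ A u) / phiSum φ 0 (proj σ₀ A u) ∧
    phiSum φ 1 (proj σ₀ A u) / phiSum φ 0 (proj σ₀ A u) < φ := by
  classical
  have hr1 : 1 ≤ proj σ₀ A u := proj_pos σ₀ hu
  set r := proj σ₀ A u with hr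
  set S1 := phiSum φ 1 r with hS1
  have hS0 : phiSum φ 0 r = 1 + S1 := phiSum_zero_split r
  have hS1nn : 0 ≤ S1 := phiSum_one_nonneg hφ0 r
  have hS0pos : 0 < phiSum φ 0 r := by rw [hS0]; linarith
  set L := ∑ σ ∈ Finset.univ.filter (fun σ : Equiv.Perm (Fin n) => proj σ A u < r),
      φ ^ kendall σ σ₀ with hL
  set R := ∑ σ ∈ Finset.univ.filter (fun σ : Equiv.Perm (Fin n) => r ≤ proj σ A u),
      φ ^ kendall σ σ₀ with hR
  have hLR : L ≤ S1 * R := L_bound hφ0 hφ1 hu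
  have hLnn : 0 ≤ L := Finset.sum_nonneg fun σ _ => le_of_lt (pow_pos hφ0 _)
  have hRpos : 0 < R := by
    rw [hR]
    apply Finset.sum_pos
    · intro σ _
      exact pow_pos hφ0 _
    · refine ⟨σ₀, ?_⟩
      rw [Finset.mem_filter]
      exact ⟨Finset.mem_univ _, le_refl _⟩
  have hD : (∑ σ : Equiv.Perm (Fin n), φ ^ kendall σ σ₀) = L + R := by
    rw [hL, hR]
    have := Finset.sum_filter_add_sum_filter_not Finset.univ
      (fun σ : Equiv.Perm (Fin n) => proj σ A u < r) (fun σ => φ ^ kendall σ σ₀)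
    rw [← this]
    congr 1
    apply Finset.sum_congr _ (fun x _ => rfl)
    apply Finset.filter_congr
    intro σ _
    simp [not_lt]
  constructor
  · have hEq : mallowsProb σ₀ φ (fun σ => proj σ A u < proj σ₀ A u) = L / (L + R) := by
      rw [mallowsProb, hD]
      congr 1
      rw [hL, Finset.sum_filter]
      apply Finset.sum_congr rfl
      intro σ _
      by_cases hc : proj σ A u < proj σ₀ A u <;> simp [hc, hr]
    rw [hEq, hS0]
    rw [div_le_div_iff₀ (by linarith) (by linarith)]
    nlinarith
  · rw [div_lt_iff₀ hS0pos]
    have hmul := phi_mul_phiSum (φ := φ) r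
    have hp : 0 < φ ^ (r + 1) := pow_pos hφ0 _
    linarith
end

section
/- Let 0 < φ < 1 satisfy φ + φ² < 1 + φⁿ, and write φ_{a:b} = φ^a + φ^{a+1} + ... + φ^b. Then for every natural number ℓ ≥ 0, (1 + φ^ℓ · φ_{1:n-ℓ-2}) / (φ^{-1} + φ^{2ℓ} · φ_{2:n-ℓ-1}) ≤ φ_{1:n-1} / (1 + φ_{3:n}). -/
lemma phiSum_nonneg (φ : ℝ) (hφ : 0 ≤ φ) (a b : ℕ) : 0 ≤ phiSum φ a b :=
  Finset.sum_nonneg fun k _ => pow_nonneg hφ k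

lemma phiSum_mul (φ : ℝ) {a b : ℕ} (h : a ≤ b + 1) :
    phiSum φ a b * (1 - φ) = φ ^ a - φ ^ (b + 1) := by
  unfold phiSum
  rw [← Finset.Ico_add_one_right_eq_Icc]
  exact geom_sum_Ico_mul_neg φ h

/-- The core polynomial inequality. -/
lemma key_poly (φ u p : ℝ) (hφ0 : 0 < φ) (hφ1 : φ < 1)
    (hu : u = 1 ∨ u ≤ φ ∧ p ≤ φ ^ 2) (hu0 : 0 < u) (hp1 : p ≤ 1) (hp0 : 0 < p)
    (hcond : φ + φ ^ 2 < 1 + p * φ) :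
    (1 - φ + u * φ - p) * (1 - φ + φ ^ 3 - p * φ ^ 2) * φ ≤
      (φ - p * φ) * (1 - φ + u ^ 2 * φ ^ 3 - u * p * φ ^ 2) := by
  rcases hu with hu | ⟨hu, hp2⟩
  · subst hu; nlinarith [sq_nonneg φ, sq_nonneg p]
  · nlinarith [mul_nonneg (mul_nonneg (sub_nonneg.2 (hu.trans hφ1.le)) (sq_nonneg φ))
        (le_of_lt (by linarith : (0:ℝ) < 1 + p * φ - φ - φ ^ 2)),
      mul_nonneg (mul_nonneg (mul_nonneg (sub_nonneg.2 (hu.trans hφ1.le)) (sq_nonneg φ))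
        (mul_nonneg (sq_nonneg φ) (sub_nonneg.2 hu))) (sub_nonneg.2 hp1),
      mul_nonneg (mul_nonneg (mul_nonneg (sub_nonneg.2 (hu.trans hφ1.le)) (sq_nonneg φ))
        (mul_nonneg hφ0.le hp0.le)) (sub_nonneg.2 hp2)]

/-- Lemma B.3: if `0 < φ < 1` and `φ + φ² < 1 + φⁿ`, then for all `ℓ ≥ 0`,
`(1 + φ^ℓ φ_{1:n-ℓ-2}) / (φ⁻¹ + φ^{2ℓ} φ_{2:n-ℓ-1}) ≤ φ_{1:n-1} / (1 + φ_{3:n})`. -/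
theorem ratio_bound (n : ℕ) (hn : 2 ≤ n) (φ : ℝ) (hφ0 : 0 < φ) (hφ1 : φ < 1)
    (hcond : φ + φ ^ 2 < 1 + φ ^ n) (ℓ : ℕ) :
    (1 + φ ^ ℓ * phiSum φ 1 (n - ℓ - 2)) / (φ⁻¹ + φ ^ (2 * ℓ) * phiSum φ 2 (n - ℓ - 1)) ≤
      phiSum φ 1 (n - 1) / (1 + phiSum φ 3 n) := by
  have hφ1' : (0:ℝ) < 1 - φ := by linarith
  have hφne : φ ≠ 0 := ne_of_gt hφ0
  have hC : (0:ℝ) < 1 + phiSum φ 3 n := by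
    have := phiSum_nonneg φ hφ0.le 3 n; linarith
  have hA : phiSum φ 1 (n - 1) * (1 - φ) = φ ^ 1 - φ ^ (n - 1 + 1) :=
    phiSum_mul φ (by omega)
  have hn1 : n - 1 + 1 = n := by omega
  rw [hn1] at hA
  have hB : phiSum φ 3 n * (1 - φ) = φ ^ 3 - φ ^ (n + 1) := phiSum_mul φ (by omega)
  by_cases hcase : ℓ + 2 ≤ n
  · -- main case: both sums on the left may be nonempty
    have hD : (0:ℝ) < φ⁻¹ + φ ^ (2 * ℓ) * phiSum φ 2 (n - ℓ - 1) := by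
      have h1 := phiSum_nonneg φ hφ0.le 2 (n - ℓ - 1)
      have h2 : (0:ℝ) < φ⁻¹ := inv_pos.2 hφ0
      positivity
    have h1 : phiSum φ 1 (n - ℓ - 2) * (1 - φ) = φ ^ 1 - φ ^ (n - ℓ - 2 + 1) :=
      phiSum_mul φ (by omega)
    have h2 : phiSum φ 2 (n - ℓ - 1) * (1 - φ) = φ ^ 2 - φ ^ (n - ℓ - 1 + 1) :=
      phiSum_mul φ (by omega)
    have e1 : n - ℓ - 2 + 1 = n - ℓ - 1 := by omega
    have e2 : n - ℓ - 1 + 1 = n - ℓ := by omega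
    rw [e1] at h1; rw [e2] at h2
    rw [div_le_div_iff₀ hD hC]
    set u := φ ^ ℓ with hu_def
    set q := φ ^ (n - ℓ - 1) with hq_def
    have hq2 : φ ^ (n - ℓ) = q * φ := by
      rw [hq_def, ← pow_succ]; congr 1; omega
    have hq3 : φ ^ n = u * q * φ := by
      rw [hu_def, hq_def, ← pow_add, ← pow_succ]; congr 1; omega
    have hq4 : φ ^ (n + 1) = u * q * φ ^ 2 := by
      rw [hu_def, hq_def, ← pow_add, ← pow_add]; congr 1; omega
    have h2ℓ : φ ^ (2 * ℓ) = u * u := by rw [hu_def, ← pow_add]; congr 1; omega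
    have hu0 : 0 < u := pow_pos hφ0 ℓ
    have hq0 : 0 < q := pow_pos hφ0 _
    have hp0 : 0 < u * q := mul_pos hu0 hq0
    have hp1 : u * q ≤ 1 := by
      rw [hu_def, hq_def, ← pow_add]
      exact pow_le_one₀ hφ0.le hφ1.le
    have hualt : u = 1 ∨ u ≤ φ ∧ u * q ≤ φ ^ 2 := by
      rcases Nat.eq_zero_or_pos ℓ with h | h
      · left; rw [hu_def, h, pow_zero]
      · right
        constructor
        · rw [hu_def]
          calc φ ^ ℓ ≤ φ ^ 1 := pow_le_pow_of_le_one hφ0.le hφ1.le h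
            _ = φ := pow_one φ
        · rw [hu_def, hq_def, ← pow_add]
          exact pow_le_pow_of_le_one hφ0.le hφ1.le (by omega)
    have hcond' : φ + φ ^ 2 < 1 + u * q * φ := by rwa [hq3] at hcond
    have hkey := key_poly φ u (u * q) hφ0 hφ1 hualt hu0 hp1 hp0 hcond'
    have hinv : φ⁻¹ * φ = 1 := inv_mul_cancel₀ hφne
    rw [← mul_le_mul_iff_right₀ (show (0:ℝ) < (1 - φ)^2 * φ by positivity)]
    calc (1 - φ)^2 * φ *
          ((1 + u * phiSum φ 1 (n - ℓ - 2)) * (1 + phiSum φ 3 n))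
        = ((1 - φ) * (1 + u * phiSum φ 1 (n - ℓ - 2))) *
            ((1 - φ) * (1 + phiSum φ 3 n)) * φ := by ring
      _ = (1 - φ + u * φ - u * q) * (1 - φ + φ ^ 3 - u * q * φ ^ 2) * φ := by
          rw [show (1 - φ) * (1 + u * phiSum φ 1 (n - ℓ - 2)) = 1 - φ + u * φ - u * q from by
              linear_combination u * h1,
            show (1 - φ) * (1 + phiSum φ 3 n) = 1 - φ + φ ^ 3 - u * q * φ ^ 2 from by
              linear_combination hB - hq4]
      _ ≤ (φ - u * q * φ) * (1 - φ + u ^ 2 * φ ^ 3 - u * (u * q) * φ ^ 2) := hkey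
      _ = ((1 - φ) * phiSum φ 1 (n - 1)) *
            (((1 - φ) * (φ⁻¹ + φ ^ (2 * ℓ) * phiSum φ 2 (n - ℓ - 1))) * φ) := by
          rw [show (1 - φ) * phiSum φ 1 (n - 1) = φ - u * q * φ from by
              linear_combination hA - hq3,
            show ((1 - φ) * (φ⁻¹ + φ ^ (2 * ℓ) * phiSum φ 2 (n - ℓ - 1))) * φ
                = 1 - φ + u ^ 2 * φ ^ 3 - u * (u * q) * φ ^ 2 from by
              linear_combination (1 - φ) * hinv + (φ ^ (2 * ℓ) * φ) * h2
                - (φ ^ (2 * ℓ) * φ) * hq2 + (φ ^ 3 - q * φ ^ 2) * h2ℓ]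
      _ = (1 - φ)^2 * φ *
            (phiSum φ 1 (n - 1) * (φ⁻¹ + φ ^ (2 * ℓ) * phiSum φ 2 (n - ℓ - 1))) := by
          ring
  · -- degenerate case: the sums on the left are empty
    have hz1 : phiSum φ 1 (n - ℓ - 2) = 0 := by
      unfold phiSum
      rw [Finset.Icc_eq_empty (by omega), Finset.sum_empty]
    have hz2 : phiSum φ 2 (n - ℓ - 1) = 0 := by
      unfold phiSum
      rw [Finset.Icc_eq_empty (by omega), Finset.sum_empty]
    rw [hz1, hz2]
    simp only [mul_zero, add_zero]
    rw [one_div, inv_inv, le_div_iff₀ hC]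
    have hvn : φ ^ n ≤ φ ^ 2 := pow_le_pow_of_le_one hφ0.le hφ1.le hn
    have hstep : (φ * (1 + phiSum φ 3 n)) * (1 - φ) ≤ phiSum φ 1 (n - 1) * (1 - φ) := by
      have hBB : (φ * (1 + phiSum φ 3 n)) * (1 - φ)
          = φ * (1 - φ + φ ^ 3 - φ ^ n * φ) := by
        linear_combination φ * hB + φ * (pow_succ φ n)
      rw [hBB, hA]
      have h1φ2 : (0:ℝ) ≤ 1 - φ ^ 2 := by nlinarith
      nlinarith [mul_nonneg (sub_nonneg.2 hvn) h1φ2]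
    exact le_of_mul_le_mul_right hstep hφ1'
end
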